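/- Let 0 ≤ a ≤ b ≤ 1. If the high bidder (sunk bid b) stays at total bid b with probability b − a and otherwise picks a total uniform on (b, a+1], and the low bidder behaves symmetrically (stays at a with probability b − a, else uniform on (b, a+1]), then the high bidder's expected continuation payoff (win probability minus expected second-stage payment) is b − a. -/

import Mathlib

open MeasureTheory Set

/-- If the high bidder (sunk bid b) stays at total b with probability b − a and otherwise
is uniform on (b, a+1], and the low bidder stays at a with probability b − a and otherwise
is uniform on (b, a+1] (independently), with the high bidder winning ties, then the high
bidder's expected continuation payoff (win probability minus expected second-stage
payment) is b − a. -/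
theorem high_bidder_continuation_payoff (a b : ℝ) (h0 : 0 ≤ a) (hab : a ≤ b) (hb : b ≤ 1) :
    let μH : Measure ℝ :=
      ENNReal.ofReal (b - a) • Measure.dirac b + volume.restrict (Ioc b (a + 1))
    let μL : Measure ℝ :=
      ENNReal.ofReal (b - a) • Measure.dirac a + volume.restrict (Ioc b (a + 1))
    ((μH.prod μL) {p : ℝ × ℝ | p.1 ≥ p.2}).toReal - ((∫ x, x ∂μH) - b) = b - a := by
  intro μH μL
  have hba1 : b ≤ a + 1 := by linarith
  set c : ℝ := b - a with hc
  set L : ℝ := a + 1 - b with hL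
  have hc0 : 0 ≤ c := by simp [hc]; linarith
  have hL0 : 0 ≤ L := by simp [hL]; linarith
  -- the set is measurable
  have hS : MeasurableSet {p : ℝ × ℝ | p.1 ≥ p.2} :=
    measurableSet_le measurable_snd measurable_fst
  -- inner function: μL (Iic x)
  have hIic : ∀ x : ℝ, (Prod.mk x ⁻¹' {p : ℝ × ℝ | p.1 ≥ p.2}) = Iic x := by
    intro x; rfl
  -- value of μL (Iic b)
  have hμLb : μL (Iic b) = ENNReal.ofReal c := by
    have h1 : (Measure.dirac a) (Iic b) = 1 := by
      rw [Measure.dirac_apply' _ measurableSet_Iic]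
      simp [hab]
    have h2 : (volume.restrict (Ioc b (a + 1))) (Iic b) = 0 := by
      rw [Measure.restrict_apply measurableSet_Iic]
      have : Iic b ∩ Ioc b (a + 1) = ∅ := by
        ext x; simp only [mem_inter_iff, mem_Iic, mem_Ioc, mem_empty_iff_false, iff_false]
        rintro ⟨h1, h2, _⟩; linarith
      rw [this]; simp
    simp [μL, Measure.add_apply, h1, h2]; rfl
  -- value of μL (Iic x) for x in the interval
  have hμLx : ∀ x ∈ Ioc b (a + 1), μL (Iic x)
      = ENNReal.ofReal c + ENNReal.ofReal (x - b) := by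
    intro x hx
    have hx1 : b < x := hx.1
    have hx2 : x ≤ a + 1 := hx.2
    have h1 : (Measure.dirac a) (Iic x) = 1 := by
      rw [Measure.dirac_apply' _ measurableSet_Iic]
      have : a ≤ x := by linarith
      simp [this]
    have h2 : (volume.restrict (Ioc b (a + 1))) (Iic x) = ENNReal.ofReal (x - b) := by
      rw [Measure.restrict_apply measurableSet_Iic]
      have : Iic x ∩ Ioc b (a + 1) = Ioc b x := by
        ext y; simp only [mem_inter_iff, mem_Iic, mem_Ioc]
        constructor
        · rintro ⟨hy, hy1, hy2⟩; exact ⟨hy1, hy⟩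
        · rintro ⟨hy1, hy2⟩; exact ⟨hy2, hy1, by linarith⟩
      rw [this, Real.volume_Ioc]
    simp [μL, Measure.add_apply, h1, h2]; rfl
  -- compute the product measure of the winning set
  have hwin : (μH.prod μL) {p : ℝ × ℝ | p.1 ≥ p.2}
      = ENNReal.ofReal c * ENNReal.ofReal c
        + (ENNReal.ofReal c * ENNReal.ofReal L + ENNReal.ofReal (L ^ 2 / 2)) := by
    rw [Measure.prod_apply hS]
    simp only [hIic]
    rw [show μH = ENNReal.ofReal c • Measure.dirac b + volume.restrict (Ioc b (a + 1)) from rfl]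
    rw [lintegral_add_measure, lintegral_smul_measure, lintegral_dirac, hμLb]
    congr 1
    have hint : ∫⁻ x in Ioc b (a + 1), μL (Iic x)
        = ∫⁻ x in Ioc b (a + 1), (ENNReal.ofReal c + ENNReal.ofReal (x - b)) :=
      setLIntegral_congr_fun measurableSet_Ioc hμLx
    rw [hint, lintegral_add_left measurable_const, setLIntegral_const,
      Real.volume_Ioc, ← hL]
    congr 1
    have hi : IntegrableOn (fun x : ℝ => x - b) (Ioc b (a + 1)) volume :=
      (continuous_id.sub continuous_const).integrableOn_Ioc
    have hnn : 0 ≤ᵐ[volume.restrict (Ioc b (a + 1))] fun x : ℝ => x - b := by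
      refine (ae_restrict_iff' measurableSet_Ioc).2 (ae_of_all _ ?_)
      intro x hx; simp only [Pi.zero_apply]; linarith [hx.1]
    rw [← ofReal_integral_eq_lintegral_ofReal hi hnn]
    congr 1
    rw [← intervalIntegral.integral_of_le hba1]
    rw [intervalIntegral.integral_sub intervalIntegral.intervalIntegrable_id
      intervalIntegrable_const, integral_id, intervalIntegral.integral_const]
    rw [hL]; simp; ring
  -- compute the mean of μH
  have hmean : (∫ x, x ∂μH) = c * b + ((a + 1) ^ 2 - b ^ 2) / 2 := by
    rw [show μH = ENNReal.ofReal c • Measure.dirac b + volume.restrict (Ioc b (a + 1)) from rfl]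
    have hi1 : Integrable (fun x : ℝ => x) (ENNReal.ofReal c • Measure.dirac b) := by
      refine Integrable.smul_measure ?_ ENNReal.ofReal_ne_top
      exact (integrable_const b).congr (ae_eq_dirac (fun x : ℝ => x)).symm
    have hi2 : Integrable (fun x : ℝ => x) (volume.restrict (Ioc b (a + 1))) :=
      continuous_id.integrableOn_Ioc
    rw [integral_add_measure hi1 hi2, integral_smul_measure, integral_dirac]
    rw [← intervalIntegral.integral_of_le hba1]
    rw [ENNReal.toReal_ofReal hc0]
    rw [integral_id]; simp only [smul_eq_mul]
  -- put it together
  rw [hwin, hmean]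
  rw [ENNReal.toReal_add, ENNReal.toReal_add, ENNReal.toReal_mul, ENNReal.toReal_mul]
  · rw [ENNReal.toReal_ofReal hc0, ENNReal.toReal_ofReal hL0,
      ENNReal.toReal_ofReal (by positivity : (0:ℝ) ≤ L ^ 2 / 2)]
    simp only [hc, hL]; ring
  · exact ENNReal.mul_ne_top ENNReal.ofReal_ne_top ENNReal.ofReal_ne_top
  · exact ENNReal.ofReal_ne_top
  · exact ENNReal.mul_ne_top ENNReal.ofReal_ne_top ENNReal.ofReal_ne_top
  · exact ENNReal.add_ne_top.2 ⟨ENNReal.mul_ne_top ENNReal.ofReal_ne_top ENNReal.ofReal_ne_top,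
      ENNReal.ofReal_ne_top⟩
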